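/- For every s ≥ 9 and every d ≥ 2, the complement of the cycle C_s is not the intersection graph of any family of axis-parallel 2-dimensional boxes (2-boxes) in ℝ^d. -/
import Mathlib


open Set

/-- An axis-parallel box in `ℝ^d`: a product of nonempty closed intervals. -/
def IsBoxIn (d : ℕ) (s : Set (Fin d → ℝ)) : Prop :=
  ∃ lo hi : Fin d → ℝ, (∀ i, lo i ≤ hi i) ∧
    s = {x | ∀ i, x i ∈ Set.Icc (lo i) (hi i)}

/-- A `p`-box in `ℝ^d`: a product of nonempty closed intervals, exactly `d - p`
of which are degenerate (single points). -/
def IsPBoxIn (p d : ℕ) (s : Set (Fin d → ℝ)) : Prop :=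
  ∃ lo hi : Fin d → ℝ, (∀ i, lo i ≤ hi i) ∧
    {i : Fin d | lo i = hi i}.ncard = d - p ∧
    s = {x | ∀ i, x i ∈ Set.Icc (lo i) (hi i)}

/-- A graph is an interval graph if it is the intersection graph of a family of
closed real intervals. -/
def IsIntervalGraph {V : Type*} (G : SimpleGraph V) : Prop :=
  ∃ a b : V → ℝ, (∀ v, a v ≤ b v) ∧
    ∀ u v : V, u ≠ v →
      (G.Adj u v ↔ (Set.Icc (a u) (b u) ∩ Set.Icc (a v) (b v)).Nonempty)

/-- `G` is the intersection graph of a family of `p`-boxes in `ℝ^d`. -/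
def RealizableAsPBoxes {V : Type*} (p d : ℕ) (G : SimpleGraph V) : Prop :=
  ∃ B : V → Set (Fin d → ℝ), (∀ v, IsPBoxIn p d (B v)) ∧
    ∀ u v : V, u ≠ v → (G.Adj u v ↔ (B u ∩ B v).Nonempty)

/-- `G` is the intersection graph of a family of (full) axis-parallel boxes in `ℝ^d`. -/
def RealizableAsBoxes {V : Type*} (d : ℕ) (G : SimpleGraph V) : Prop :=
  ∃ B : V → Set (Fin d → ℝ), (∀ v, IsBoxIn d (B v)) ∧
    ∀ u v : V, u ≠ v → (G.Adj u v ↔ (B u ∩ B v).Nonempty)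

/-- The intersection graph of a family of sets in `ℝ^d`. -/
def intersectionGraph {ι : Type*} {d : ℕ} (B : ι → Set (Fin d → ℝ)) : SimpleGraph ι :=
  SimpleGraph.fromRel fun i j => (B i ∩ B j).Nonempty

/-- The family `B` can be pierced by at most `n` points. -/
def Pierceable {ι : Type*} {d : ℕ} (B : ι → Set (Fin d → ℝ)) (n : ℕ) : Prop :=
  ∃ P : Finset (Fin d → ℝ), P.card ≤ n ∧ ∀ i, ∃ p ∈ P, p ∈ B i

/-- The subfamily of `B` indexed by `S` can be pierced by at most `n` points. -/
def PierceableOn {ι : Type*} {d : ℕ} (B : ι → Set (Fin d → ℝ)) (S : Finset ι) (n : ℕ) : Prop :=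
  ∃ P : Finset (Fin d → ℝ), P.card ≤ n ∧ ∀ i ∈ S, ∃ p ∈ P, p ∈ B i

/-- The cycle graph on `s` vertices, with vertex set `ZMod s`. -/
def cyc (s : ℕ) : SimpleGraph (ZMod s) := SimpleGraph.fromRel fun i j => j = i + 1

/-- The boxicity of a graph, as an extended natural number. -/
noncomputable def boxicity {V : Type*} (G : SimpleGraph V) : ℕ∞ :=
  sInf {n : ℕ∞ | ∃ k : ℕ, n = k ∧ RealizableAsBoxes k G}

/-- The `p`-boxicity of a graph: the least `d ≥ p` such that `G` is realizable as
`p`-boxes in `ℝ^d` (possibly `∞`). -/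
noncomputable def pboxicity {V : Type*} (p : ℕ) (G : SimpleGraph V) : ℕ∞ :=
  sInf {n : ℕ∞ | ∃ k : ℕ, n = k ∧ p ≤ k ∧ RealizableAsPBoxes p k G}

lemma zmod_natCast_ne_zero (s m : ℕ) (hs : 9 ≤ s) (h1 : 1 ≤ m) (h2 : m ≤ 8) :
    (m : ZMod s) ≠ 0 := by
  haveI : NeZero s := ⟨by omega⟩
  intro h
  rw [ZMod.natCast_eq_zero_iff] at h
  have := Nat.le_of_dvd (by omega) h
  omega

lemma cyc_compl_adj (s : ℕ) (hs : 9 ≤ s) (x : ZMod s) (m : ℕ)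
    (h2 : 2 ≤ m) (h7 : m ≤ 7) : ((cyc s)ᶜ).Adj x (x + (m : ℕ)) := by
  rw [SimpleGraph.compl_adj]
  constructor
  · intro h
    exact zmod_natCast_ne_zero s m hs (by omega) (by omega) ((left_eq_add).mp h)
  · intro h
    rw [cyc, SimpleGraph.fromRel_adj] at h
    rcases h.2 with h1 | h1
    · have hm1 : (m : ZMod s) = 1 := add_left_cancel h1
      have hm : (m : ℕ) = (m - 1) + 1 := by omega
      rw [hm] at hm1
      push_cast at hm1
      have h0 : ((m - 1 : ℕ) : ZMod s) = 0 := by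
        have : ((m - 1 : ℕ) : ZMod s) + 1 = 0 + 1 := by rw [hm1, zero_add]
        exact add_right_cancel this
      exact zmod_natCast_ne_zero s (m - 1) hs (by omega) (by omega) h0
    · have : x = x + ((m : ZMod s) + 1) := by rw [← add_assoc]; exact h1
      have h0 : (m : ZMod s) + 1 = 0 := (left_eq_add).mp this
      have h0' : ((m + 1 : ℕ) : ZMod s) = 0 := by push_cast; exact h0
      exact zmod_natCast_ne_zero s (m + 1) hs (by omega) (by omega) h0'

lemma cyc_adj_succ (s : ℕ) (hs : 9 ≤ s) (v : ZMod s) : (cyc s).Adj v (v + 1) := by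
  rw [cyc, SimpleGraph.fromRel_adj]
  refine ⟨?_, Or.inl rfl⟩
  intro h
  have h0 : (1 : ZMod s) = 0 := (left_eq_add).mp h
  have := zmod_natCast_ne_zero s 1 hs le_rfl (by omega)
  rw [Nat.cast_one] at this
  exact this h0


/-- for `s ≥ 9`, `d ≥ 2`, the complement of `C_s` is not realizable as
2-boxes in `ℝ^d`. -/
theorem compl_cycle_not_realizable_two_boxes (s d : ℕ) (hs : 9 ≤ s) (hd : 2 ≤ d) :
    ¬ RealizableAsPBoxes 2 d (cyc s)ᶜ := by
  rintro ⟨B, hbox, hadj⟩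
  simp only [IsPBoxIn] at hbox
  choose lo hi hle hdeg hB using hbox
  -- convenient adjacency producer
  have hAdj : ∀ (x y : ZMod s) (m : ℕ), 2 ≤ m → m ≤ 7 → y = x + (m : ℕ) →
      ((cyc s)ᶜ).Adj x y := by
    rintro x y m h2 h7 rfl
    exact cyc_compl_adj s hs x m h2 h7
  -- meets: adjacent pairs intersect in every coordinate
  have hmeet : ∀ u v : ZMod s, ((cyc s)ᶜ).Adj u v → ∀ i : Fin d,
      ∃ t : ℝ, lo u i ≤ t ∧ t ≤ hi u i ∧ lo v i ≤ t ∧ t ≤ hi v i := by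
    intro u v h i
    obtain ⟨x, hxu, hxv⟩ := (hadj u v h.ne).mp h
    rw [hB] at hxu hxv
    exact ⟨x i, (hxu i).1, (hxu i).2, (hxv i).1, (hxv i).2⟩
  -- separation at cycle edges
  have hsep : ∀ v : ZMod s, ∃ i : Fin d,
      hi v i < lo (v + 1) i ∨ hi (v + 1) i < lo v i := by
    intro v
    by_contra hcon
    push_neg at hcon
    have hne : v ≠ v + 1 := (cyc_adj_succ s hs v).ne
    have hnonempty : (B v ∩ B (v + 1)).Nonempty := by
      refine ⟨fun i => max (lo v i) (lo (v + 1) i), ?_, ?_⟩ <;> rw [hB] <;> intro i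
      · exact ⟨le_max_left _ _, max_le (hle v i) (hcon i).1⟩
      · exact ⟨le_max_right _ _, max_le (hcon i).2 (hle (v + 1) i)⟩
    have hA := (hadj v (v + 1) hne).mpr hnonempty
    rw [SimpleGraph.compl_adj] at hA
    exact hA.2 (cyc_adj_succ s hs v)
  choose φ hφ using hsep
  -- Claim 1: far-apart edges have distinct separating coordinates
  have hdiff : ∀ a b : ZMod s, ((cyc s)ᶜ).Adj a b → ((cyc s)ᶜ).Adj a (b + 1) →
      ((cyc s)ᶜ).Adj (a + 1) b → ((cyc s)ᶜ).Adj (a + 1) (b + 1) → φ a ≠ φ b := by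
    intro a b h1 h2 h3 h4 heq
    obtain ⟨t1, ht1⟩ := hmeet a b h1 (φ a)
    obtain ⟨t2, ht2⟩ := hmeet a (b + 1) h2 (φ a)
    obtain ⟨t3, ht3⟩ := hmeet (a + 1) b h3 (φ a)
    obtain ⟨t4, ht4⟩ := hmeet (a + 1) (b + 1) h4 (φ a)
    have sa := hφ a
    have sb := hφ b
    rw [← heq] at sb
    obtain ⟨ha1, ha2, ha3, ha4⟩ := ht1
    obtain ⟨hb1, hb2, hb3, hb4⟩ := ht2
    obtain ⟨hc1, hc2, hc3, hc4⟩ := ht3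
    obtain ⟨hd1, hd2, hd3, hd4⟩ := ht4
    rcases sa with h | h <;> rcases sb with h' | h' <;> linarith
  -- Claim 2: a vertex far from an edge is non-degenerate at the separating coordinate
  have hmem : ∀ u a : ZMod s, ((cyc s)ᶜ).Adj u a → ((cyc s)ᶜ).Adj u (a + 1) →
      lo u (φ a) ≠ hi u (φ a) := by
    intro u a h1 h2 heq
    obtain ⟨t1, ht1a, ht1b, ht1c, ht1d⟩ := hmeet u a h1 (φ a)
    obtain ⟨t2, ht2a, ht2b, ht2c, ht2d⟩ := hmeet u (a + 1) h2 (φ a)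
    rcases hφ a with h | h <;> linarith
  -- cardinality of non-degenerate coords is ≤ 2
  have hcard : ∀ u : ZMod s, ({i : Fin d | lo u i ≠ hi u i}).ncard ≤ 2 := by
    intro u
    have h1 := hdeg u
    have he : {i : Fin d | lo u i ≠ hi u i} = {i : Fin d | lo u i = hi u i}ᶜ := by
      ext i; simp
    have h2 : {i : Fin d | lo u i = hi u i}.ncard
        + {i : Fin d | lo u i = hi u i}ᶜ.ncard = Nat.card (Fin d) :=
      Set.ncard_add_ncard_compl _
    rw [Nat.card_eq_fintype_card, Fintype.card_fin] at h2
    rw [he]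
    omega
  -- the two "far" inequalities
  have hA25 : ∀ u : ZMod s, φ (u + 2) ≠ φ (u + 5) := by
    intro u
    refine hdiff (u + 2) (u + 5) ?_ ?_ ?_ ?_
    · exact hAdj _ _ 3 (by norm_num) (by norm_num) (by push_cast; ring)
    · exact hAdj _ _ 4 (by norm_num) (by norm_num) (by push_cast; ring)
    · exact hAdj _ _ 2 (by norm_num) (by norm_num) (by push_cast; ring)
    · exact hAdj _ _ 3 (by norm_num) (by norm_num) (by push_cast; ring)
  have hA26 : ∀ u : ZMod s, φ (u + 2) ≠ φ (u + 6) := by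
    intro u
    refine hdiff (u + 2) (u + 6) ?_ ?_ ?_ ?_
    · exact hAdj _ _ 4 (by norm_num) (by norm_num) (by push_cast; ring)
    · exact hAdj _ _ 5 (by norm_num) (by norm_num) (by push_cast; ring)
    · exact hAdj _ _ 3 (by norm_num) (by norm_num) (by push_cast; ring)
    · exact hAdj _ _ 4 (by norm_num) (by norm_num) (by push_cast; ring)
  -- key: φ (u+5) = φ (u+6) for all u
  have hkey : ∀ u : ZMod s, φ (u + 5) = φ (u + 6) := by
    intro u
    by_contra hne
    have m2 : φ (u + 2) ∈ {i : Fin d | lo u i ≠ hi u i} :=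
      hmem u (u + 2) (hAdj _ _ 2 (by norm_num) (by norm_num) (by push_cast; ring))
        (hAdj _ _ 3 (by norm_num) (by norm_num) (by push_cast; ring))
    have m5 : φ (u + 5) ∈ {i : Fin d | lo u i ≠ hi u i} :=
      hmem u (u + 5) (hAdj _ _ 5 (by norm_num) (by norm_num) (by push_cast; ring))
        (hAdj _ _ 6 (by norm_num) (by norm_num) (by push_cast; ring))
    have m6 : φ (u + 6) ∈ {i : Fin d | lo u i ≠ hi u i} :=
      hmem u (u + 6) (hAdj _ _ 6 (by norm_num) (by norm_num) (by push_cast; ring))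
        (hAdj _ _ 7 (by norm_num) (by norm_num) (by push_cast; ring))
    have hsub : ({φ (u + 2), φ (u + 5), φ (u + 6)} : Set (Fin d))
        ⊆ {i : Fin d | lo u i ≠ hi u i} := by
      intro x hx
      rcases hx with rfl | rfl | rfl
      exacts [m2, m5, m6]
    have h3 : ({φ (u + 2), φ (u + 5), φ (u + 6)} : Set (Fin d)).ncard = 3 := by
      rw [Set.ncard_insert_of_notMem (by simp [hA25 u, hA26 u]) (Set.toFinite _),
        Set.ncard_pair hne]
    have := Set.ncard_le_ncard hsub (Set.toFinite _)
    rw [h3] at this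
    have := hcard u
    omega
  -- hence φ is "locally constant": φ v = φ (v+1) for all v
  have hconst : ∀ v : ZMod s, φ v = φ (v + 1) := by
    intro v
    have h := hkey (v - 5)
    rw [show v - 5 + 5 = v by ring, show v - 5 + 6 = v + 1 by ring] at h
    exact h
  -- contradiction: φ (0+2) = φ (0+5) but hA25
  have c2 := hconst ((0 : ZMod s) + 2)
  have c3 := hconst ((0 : ZMod s) + 3)
  have c4 := hconst ((0 : ZMod s) + 4)
  rw [show (0 : ZMod s) + 2 + 1 = 0 + 3 by ring] at c2
  rw [show (0 : ZMod s) + 3 + 1 = 0 + 4 by ring] at c3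
  rw [show (0 : ZMod s) + 4 + 1 = 0 + 5 by ring] at c4
  exact hA25 0 (c2.trans (c3.trans c4))
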